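/- With φ and θ as above (φ(t,ω) = sin(ω+t)/sin(ω) when sin(ω) ≠ 0, else 1; θ_s ω = ω + s), there is no map ψ : ℝ × ℝ → ℝ satisfying the perfect cocycle property ψ(t+s, ω) = ψ(t, θ_s ω)·ψ(s, ω) for ALL t, s ∈ ℝ and ALL ω ∈ ℝ, such that ψ(·, ω) = φ(·, ω) for all ω in a set Ω₁ ⊆ ℝ whose complement is Lebesgue-null. Concretely: if ψ is a perfect cocycle agreeing with φ(·, ω) for all ω ∈ Ω₁, then Ω₁ ∩ (0, π) = ∅. -/
import Mathlib


/-- Non-perfectibility of the crude cocycle `φ(t, ω) = sin(ω + t)/sin(ω)` (else `1`) over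
`θ_s ω = ω + s`: if `ψ` satisfies the perfect cocycle property for all `t, s, ω` and agrees with
`φ(·, ω)` for every `ω ∈ Ω₁`, then `Ω₁ ∩ (0, π) = ∅`; in particular no such perfect cocycle
exists with `Ω₁` of full Lebesgue measure. -/
theorem stmt5 (ψ : ℝ → ℝ → ℝ) (Ω₁ : Set ℝ)
    (hcocycle : ∀ t s ω : ℝ, ψ (t + s) ω = ψ t (ω + s) * ψ s ω)
    (hagree : ∀ ω ∈ Ω₁, ∀ t : ℝ,
      ψ t ω = if Real.sin ω ≠ 0 then Real.sin (ω + t) / Real.sin ω else 1) :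
    Ω₁ ∩ Set.Ioo 0 Real.pi = ∅ ∧
    ¬ (MeasureTheory.volume Ω₁ᶜ = 0 ∧ ∀ ω ∈ Ω₁, ∀ t : ℝ,
        ψ t ω = if Real.sin ω ≠ 0 then Real.sin (ω + t) / Real.sin ω else 1) := by
  have hempty : Ω₁ ∩ Set.Ioo 0 Real.pi = ∅ := by
    ext ω
    simp only [Set.mem_inter_iff, Set.mem_Ioo, Set.mem_empty_iff_false, iff_false, not_and]
    intro hΩ h0 hπ
    have hsin : Real.sin ω > 0 := Real.sin_pos_of_pos_of_lt_pi h0 hπ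
    have hne : Real.sin ω ≠ 0 := ne_of_gt hsin
    have h1 : ψ (Real.pi - ω) ω = 0 := by
      rw [hagree ω hΩ, if_pos hne]
      simp [Real.sin_pi]
    have h2 : ψ (Real.pi / 2 + (Real.pi - ω)) ω = -1 / Real.sin ω := by
      rw [hagree ω hΩ, if_pos hne]
      have : ω + (Real.pi / 2 + (Real.pi - ω)) = Real.pi / 2 + Real.pi := by ring
      rw [this]
      norm_num [Real.sin_add, Real.sin_pi, Real.cos_pi]
    have h3 := hcocycle (Real.pi / 2) (Real.pi - ω) ω
    rw [h1, h2, mul_zero] at h3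
    have : (-1 : ℝ) / Real.sin ω ≠ 0 := by
      simp [hne]
    exact this h3
  refine ⟨hempty, ?_⟩
  rintro ⟨hfull, -⟩
  have hsub : Set.Ioo 0 Real.pi ⊆ Ω₁ᶜ := by
    intro ω hω hΩ
    exact Set.eq_empty_iff_forall_notMem.mp hempty ω ⟨hΩ, hω⟩
  have := MeasureTheory.measure_mono_null hsub hfull
  rw [Real.volume_Ioo] at this
  simp only [sub_zero] at this
  exact (ENNReal.ofReal_pos.mpr Real.pi_pos).ne' (by simpa using this)
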